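/- For every x ∈ [0,1]^n, the operator norm (with respect to the Euclidean norm on ℝ^n) of the Jacobian matrix of F at x is at most 1 - μ + β·ρ(R). -/

import Mathlib

open Filter Finset

/-- The MMCA map `F`. -/
noncomputable def F {n : ℕ} (R : Matrix (Fin n) (Fin n) ℝ) (β μ : ℝ) (x : Fin n → ℝ) :
    Fin n → ℝ :=
  fun i => 1 - (1 - (1 - μ) * x i) * ∏ j, (1 - β * R i j * x j)

/-- Irreducibility of a (nonnegative) square matrix. -/
def MatIrred {n : ℕ} (R : Matrix (Fin n) (Fin n) ℝ) : Prop :=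
  ∀ i j : Fin n, ∃ k : ℕ, 0 < k ∧ (R ^ k) i j ≠ 0

/-- Spectral radius of a real matrix, as the supremum of the absolute values of the
real spectrum (appropriate here since `R` is symmetric). -/
noncomputable def specRad {n : ℕ} (R : Matrix (Fin n) (Fin n) ℝ) : ℝ :=
  sSup {r : ℝ | ∃ z ∈ spectrum ℝ R, |z| = r}

/-- Explicit formula for the partial derivatives of `F`. -/
lemma fderiv_F_apply {n : ℕ} (R : Matrix (Fin n) (Fin n) ℝ) (β μ : ℝ) (x : Fin n → ℝ)
    (i k : Fin n) :
    fderiv ℝ (fun y => F R β μ y i) x (Pi.single k 1)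
      = (1 - (1-μ) * x i) * (β * R i k) * ∏ l ∈ univ.erase k, (1 - β * R i l * x l)
        + (∏ j, (1 - β * R i j * x j)) * ((1-μ) * (if i = k then 1 else 0)) := by
  set P : Fin n → ((Fin n → ℝ) →L[ℝ] ℝ) := fun j => ContinuousLinearMap.proj j with hP
  have hproj : ∀ j : Fin n, HasFDerivAt (fun y : Fin n → ℝ => y j) (P j) x :=
    fun j => (P j).hasFDerivAt
  have hg : HasFDerivAt (fun y : Fin n → ℝ => 1 - (1-μ)*y i)
      (-((1-μ) • P i)) x := ((hproj i).const_mul (1-μ)).const_sub 1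
  have hfac : ∀ j : Fin n, HasFDerivAt (fun y : Fin n → ℝ => 1 - β * R i j * y j)
      (-((β * R i j) • P j)) x := fun j =>
    ((hproj j).const_mul (β * R i j)).const_sub 1
  have hp : HasFDerivAt (fun y : Fin n → ℝ => ∏ j, (1 - β * R i j * y j))
      (∑ j, (∏ l ∈ univ.erase j, (1 - β * R i l * x l)) •
        (-((β * R i j) • P j))) x :=
    HasFDerivAt.finset_prod (fun j _ => hfac j)
  have hF : HasFDerivAt (fun y => F R β μ y i)
      (-((1 - (1-μ) * x i) • (∑ j, (∏ l ∈ univ.erase j, (1 - β * R i l * x l)) •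
        (-((β * R i j) • P j)))
        + (∏ j, (1 - β * R i j * x j)) • (-((1-μ) • P i)))) x :=
    (hg.mul hp).const_sub 1
  rw [hF.fderiv]
  simp only [ContinuousLinearMap.neg_apply, ContinuousLinearMap.add_apply,
    ContinuousLinearMap.smul_apply, ContinuousLinearMap.sum_apply, hP,
    ContinuousLinearMap.proj_apply, Pi.single_apply, smul_eq_mul, mul_ite, mul_one, mul_zero]
  simp only [mul_neg, mul_ite, mul_zero, Finset.sum_neg_distrib, Finset.sum_ite_eq', mem_univ,
    if_true]
  by_cases hik : i = k <;> simp [hik] <;> ring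

/-- Entrywise domination gives operator norm domination. -/
lemma opNorm_le_of_abs_le {n : ℕ} (A B : Matrix (Fin n) (Fin n) ℝ)
    (h : ∀ i j, |A i j| ≤ B i j) :
    ‖Matrix.toEuclideanCLM (𝕜 := ℝ) A‖ ≤ ‖Matrix.toEuclideanCLM (𝕜 := ℝ) B‖ := by
  refine ContinuousLinearMap.opNorm_le_bound _ (norm_nonneg _) fun v => ?_
  set w : EuclideanSpace ℝ (Fin n) := WithLp.toLp 2 (fun i => |v i|) with hw
  have happ : ∀ (M : Matrix (Fin n) (Fin n) ℝ) (u : EuclideanSpace ℝ (Fin n)) (i : Fin n),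
      (Matrix.toEuclideanCLM (𝕜 := ℝ) M u) i = ∑ j, M i j * u j := fun _ _ _ => rfl
  have hwv : ‖w‖ = ‖v‖ := by
    simp [EuclideanSpace.norm_eq, hw, Real.norm_eq_abs, abs_abs]
  have h1 : ‖Matrix.toEuclideanCLM (𝕜 := ℝ) A v‖ ≤ ‖Matrix.toEuclideanCLM (𝕜 := ℝ) B w‖ := by
    rw [EuclideanSpace.norm_eq, EuclideanSpace.norm_eq]
    apply Real.sqrt_le_sqrt
    apply Finset.sum_le_sum
    intro i _
    rw [happ, happ, Real.norm_eq_abs, Real.norm_eq_abs, sq_abs, sq_abs]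
    have hb : |∑ j, A i j * v j| ≤ ∑ j, B i j * w j := by
      refine (Finset.abs_sum_le_sum_abs _ _).trans (Finset.sum_le_sum fun j _ => ?_)
      rw [abs_mul]
      exact mul_le_mul_of_nonneg_right (h i j) (abs_nonneg _)
    calc (∑ j, A i j * v j) ^ 2 ≤ (∑ j, B i j * w j) ^ 2 := by
          rw [← sq_abs (∑ j, A i j * v j)]
          exact pow_le_pow_left₀ (abs_nonneg _) hb 2
      _ = _ := rfl
  calc ‖Matrix.toEuclideanCLM (𝕜 := ℝ) A v‖ ≤ ‖Matrix.toEuclideanCLM (𝕜 := ℝ) B w‖ := h1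
    _ ≤ ‖Matrix.toEuclideanCLM (𝕜 := ℝ) B‖ * ‖w‖ := ContinuousLinearMap.le_opNorm _ _
    _ = ‖Matrix.toEuclideanCLM (𝕜 := ℝ) B‖ * ‖v‖ := by rw [hwv]

/-- The Euclidean operator norm of a symmetric matrix is at most its spectral radius. -/
lemma opNorm_le_specRad {n : ℕ} (hn : 0 < n) (R : Matrix (Fin n) (Fin n) ℝ)
    (hsymm : R.IsSymm) : ‖Matrix.toEuclideanCLM (𝕜 := ℝ) R‖ ≤ specRad R := by
  have hA : R.IsHermitian := hsymm
  set S := {r : ℝ | ∃ z ∈ spectrum ℝ R, |z| = r} with hS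
  have hSfin : S.Finite := by
    have : S = abs '' (spectrum ℝ R) := rfl
    rw [this]; exact (R.finite_spectrum).image _
  have hbdd : BddAbove S := hSfin.bddAbove
  have heM : ∀ j : Fin n, |hA.eigenvalues j| ≤ specRad R := fun j =>
    le_csSup hbdd ⟨hA.eigenvalues j, hA.eigenvalues_mem_spectrum_real j, rfl⟩
  have hM0 : 0 ≤ specRad R := le_trans (abs_nonneg _) (heM ⟨0, hn⟩)
  set b := hA.eigenvectorBasis with hb
  set e := hA.eigenvalues with he
  refine ContinuousLinearMap.opNorm_le_bound _ hM0 fun v => ?_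
  have hTb : ∀ j, Matrix.toEuclideanCLM (𝕜 := ℝ) R (b j) = e j • b j := by
    intro j
    have h1 : ⇑(Matrix.toEuclideanCLM (𝕜 := ℝ) R (b j)) = R.mulVec ⇑(b j) := rfl
    have h2 : R.mulVec ⇑(b j) = e j • ⇑(b j) := hA.mulVec_eigenvectorBasis j
    apply (EuclideanSpace.equiv (Fin n) ℝ).injective
    ext i
    simp only [EuclideanSpace.equiv]
    exact congrFun (h1.trans h2) i
  set c : Fin n → ℝ := fun j => b.repr v j with hc
  have hv : v = ∑ j, c j • b j := (b.sum_repr v).symm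
  have hTv : Matrix.toEuclideanCLM (𝕜 := ℝ) R v = ∑ j, (e j * c j) • b j := by
    conv_lhs => rw [hv]
    rw [map_sum]
    refine Finset.sum_congr rfl fun j _ => ?_
    rw [map_smul, hTb j, smul_smul, mul_comm]
  have hrepr : b.repr (Matrix.toEuclideanCLM (𝕜 := ℝ) R v) = fun j => e j * c j := by
    funext j'
    rw [hTv, map_sum]
    simp only [map_smul, OrthonormalBasis.repr_self]
    rw [WithLp.ofLp_sum, Finset.sum_apply]
    simp [EuclideanSpace.single_apply]
  have hnTv : ‖Matrix.toEuclideanCLM (𝕜 := ℝ) R v‖ = Real.sqrt (∑ j, (e j * c j) ^ 2) := by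
    rw [← b.repr.norm_map, EuclideanSpace.norm_eq, hrepr]
    simp [Real.norm_eq_abs, ← abs_mul, sq_abs]
  have hnv : ‖v‖ = Real.sqrt (∑ j, (c j) ^ 2) := by
    rw [← b.repr.norm_map, EuclideanSpace.norm_eq]
    simp [Real.norm_eq_abs, sq_abs, hc]
  rw [hnTv, hnv]
  have hsum : ∑ j, (e j * c j) ^ 2 ≤ (specRad R) ^ 2 * ∑ j, (c j) ^ 2 := by
    rw [Finset.mul_sum]
    refine Finset.sum_le_sum fun j _ => ?_
    rw [mul_pow]
    have h2 : e j ^ 2 ≤ (specRad R) ^ 2 := by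
      rw [← sq_abs (e j)]
      exact pow_le_pow_left₀ (abs_nonneg _) (heM j) 2
    exact mul_le_mul_of_nonneg_right h2 (sq_nonneg _)
  calc Real.sqrt (∑ j, (e j * c j) ^ 2) ≤ Real.sqrt ((specRad R) ^ 2 * ∑ j, (c j) ^ 2) :=
        Real.sqrt_le_sqrt hsum
    _ = specRad R * Real.sqrt (∑ j, (c j) ^ 2) := by
        rw [Real.sqrt_mul (by positivity), Real.sqrt_sq hM0]

set_option maxHeartbeats 2000000 in
set_option synthInstance.maxHeartbeats 400000 in
theorem jacobian_opNorm_bound (n : ℕ) (hn : 2 ≤ n) (R : Matrix (Fin n) (Fin n) ℝ)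
    (hsymm : R.IsSymm) (hR : ∀ i j, R i j ∈ Set.Icc (0:ℝ) 1)
    (hdiag : ∀ i, R i i = 0) (hirr : MatIrred R)
    (β μ : ℝ) (hβ : β ∈ Set.Ioo (0:ℝ) 1) (hμ : μ ∈ Set.Ioo (0:ℝ) 1)
    (x : Fin n → ℝ) (hx : ∀ i, x i ∈ Set.Icc (0:ℝ) 1) :
    ‖Matrix.toEuclideanCLM (𝕜 := ℝ)
        (Matrix.of fun i j => fderiv ℝ (fun y => F R β μ y i) x (Pi.single j 1))‖
      ≤ 1 - μ + β * specRad R := by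
  set J : Matrix (Fin n) (Fin n) ℝ :=
    Matrix.of fun i j => fderiv ℝ (fun y => F R β μ y i) x (Pi.single j 1) with hJdef
  set B : Matrix (Fin n) (Fin n) ℝ :=
    Matrix.of fun i k => (1-μ) * (if i = k then 1 else 0) + β * R i k with hBdef
  -- entrywise bound
  have hJB : ∀ i k, |J i k| ≤ B i k := by
    intro i k
    have hJik : J i k
        = (1 - (1-μ) * x i) * (β * R i k) * ∏ l ∈ univ.erase k, (1 - β * R i l * x l)
          + (∏ j, (1 - β * R i j * x j)) * ((1-μ) * (if i = k then 1 else 0)) :=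
      fderiv_F_apply R β μ x i k
    have hfac0 : ∀ l, 0 ≤ 1 - β * R i l * x l := fun l => by
      nlinarith [(hR i l).1, (hR i l).2, (hx l).1, (hx l).2, hβ.1.le, hβ.2.le,
        mul_nonneg (hR i l).1 (hx l).1]
    have hfac1 : ∀ l, 1 - β * R i l * x l ≤ 1 := fun l => by
      nlinarith [(hR i l).1, (hx l).1, hβ.1.le, mul_nonneg (hR i l).1 (hx l).1]
    have hpk0 : 0 ≤ ∏ l ∈ univ.erase k, (1 - β * R i l * x l) :=
      Finset.prod_nonneg fun l _ => hfac0 l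
    have hpk1 : ∏ l ∈ univ.erase k, (1 - β * R i l * x l) ≤ 1 :=
      Finset.prod_le_one (fun l _ => hfac0 l) (fun l _ => hfac1 l)
    have hp0 : 0 ≤ ∏ j, (1 - β * R i j * x j) :=
      Finset.prod_nonneg fun l _ => hfac0 l
    have hp1 : ∏ j, (1 - β * R i j * x j) ≤ 1 :=
      Finset.prod_le_one (fun l _ => hfac0 l) (fun l _ => hfac1 l)
    have hg0 : 0 ≤ 1 - (1-μ) * x i := by
      nlinarith [(hx i).1, (hx i).2, hμ.1.le, hμ.2.le]
    have hg1 : 1 - (1-μ) * x i ≤ 1 := by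
      nlinarith [(hx i).1, hμ.2.le]
    have hβR : 0 ≤ β * R i k := mul_nonneg hβ.1.le (hR i k).1
    have hμ1 : 0 ≤ 1 - μ := by linarith [hμ.2.le]
    have hBik : B i k = (1-μ) * (if i = k then 1 else 0) + β * R i k := rfl
    have hgp : (1 - (1-μ) * x i) * (∏ l ∈ univ.erase k, (1 - β * R i l * x l)) ≤ 1 :=
      mul_le_one₀ hg1 hpk0 hpk1
    rw [hJik, hBik]
    by_cases hik : i = k
    · simp only [if_pos hik, mul_one]
      rw [abs_le]
      constructor <;>
        nlinarith [mul_nonneg hg0 hpk0, mul_nonneg (mul_nonneg hg0 hβR) hpk0,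
          mul_nonneg hp0 hμ1, hgp]
    · simp only [if_neg hik, mul_zero, add_zero, zero_add]
      rw [abs_le]
      constructor <;>
        nlinarith [mul_nonneg hg0 hpk0, mul_nonneg (mul_nonneg hg0 hβR) hpk0, hgp]
  have step1 : ‖Matrix.toEuclideanCLM (𝕜 := ℝ) J‖ ≤ ‖Matrix.toEuclideanCLM (𝕜 := ℝ) B‖ :=
    opNorm_le_of_abs_le J B hJB
  -- B = (1-μ) • 1 + β • R
  have hBsplit : B = (1-μ) • (1 : Matrix (Fin n) (Fin n) ℝ) + β • R := by
    ext i k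
    simp [hBdef, Matrix.one_apply, Matrix.add_apply, Matrix.smul_apply, smul_eq_mul]
  have hTB : Matrix.toEuclideanCLM (𝕜 := ℝ) B
      = (1-μ) • (1 : EuclideanSpace ℝ (Fin n) →L[ℝ] EuclideanSpace ℝ (Fin n))
        + β • Matrix.toEuclideanCLM (𝕜 := ℝ) R := by
    rw [hBsplit, map_add, map_smul (Matrix.toEuclideanCLM (𝕜 := ℝ)) (1-μ)
      (1 : Matrix (Fin n) (Fin n) ℝ), map_smul (Matrix.toEuclideanCLM (𝕜 := ℝ)) β R,
      map_one (Matrix.toEuclideanCLM (𝕜 := ℝ))]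
  haveI : Nontrivial (EuclideanSpace ℝ (Fin n)) := by
    refine ⟨⟨0, EuclideanSpace.single ⟨0, by omega⟩ (1:ℝ), fun h => ?_⟩⟩
    have := congrFun (congrArg (fun (u : EuclideanSpace ℝ (Fin n)) => (u : Fin n → ℝ)) h)
      ⟨0, by omega⟩
    simp [EuclideanSpace.single_apply] at this
  have hnorm1 : ‖(1 : EuclideanSpace ℝ (Fin n) →L[ℝ] EuclideanSpace ℝ (Fin n))‖ = 1 :=
    ContinuousLinearMap.norm_id
  have step2 : ‖Matrix.toEuclideanCLM (𝕜 := ℝ) B‖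
      ≤ (1-μ) + β * ‖Matrix.toEuclideanCLM (𝕜 := ℝ) R‖ := by
    rw [hTB]
    calc ‖(1-μ) • (1 : EuclideanSpace ℝ (Fin n) →L[ℝ] EuclideanSpace ℝ (Fin n))
          + β • Matrix.toEuclideanCLM (𝕜 := ℝ) R‖
        ≤ ‖(1-μ) • (1 : EuclideanSpace ℝ (Fin n) →L[ℝ] EuclideanSpace ℝ (Fin n))‖
          + ‖β • Matrix.toEuclideanCLM (𝕜 := ℝ) R‖ := norm_add_le _ _
      _ ≤ ‖(1-μ : ℝ)‖ * ‖(1 : EuclideanSpace ℝ (Fin n) →L[ℝ] EuclideanSpace ℝ (Fin n))‖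
          + ‖(β : ℝ)‖ * ‖Matrix.toEuclideanCLM (𝕜 := ℝ) R‖ :=
          add_le_add (ContinuousLinearMap.opNorm_smul_le _ _) (ContinuousLinearMap.opNorm_smul_le _ _)
      _ = (1-μ) + β * ‖Matrix.toEuclideanCLM (𝕜 := ℝ) R‖ := by
          rw [hnorm1, Real.norm_eq_abs, Real.norm_eq_abs,
            abs_of_nonneg (by linarith [hμ.2.le] : (0:ℝ) ≤ 1 - μ), abs_of_nonneg hβ.1.le, mul_one]
  have step3 : ‖Matrix.toEuclideanCLM (𝕜 := ℝ) R‖ ≤ specRad R :=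
    opNorm_le_specRad (by omega) R hsymm
  calc ‖Matrix.toEuclideanCLM (𝕜 := ℝ) J‖
      ≤ ‖Matrix.toEuclideanCLM (𝕜 := ℝ) B‖ := step1
    _ ≤ (1-μ) + β * ‖Matrix.toEuclideanCLM (𝕜 := ℝ) R‖ := step2
    _ ≤ 1 - μ + β * specRad R := by
        have := mul_le_mul_of_nonneg_left step3 hβ.1.le
        linarith
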